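/- (Quotient of the Golden order by (1+i)) Let θ = (1+√5)/2 and θ̄ = (1−√5)/2 viewed in ℂ, and let S be a subring of the 2×2 complex matrices whose carrier is the set Λ of matrices [[p+qθ, i·(r+sθ̄)], [r+sθ, p+qθ̄]] with p,q,r,s ∈ ℤ[i]. Then there exists a surjective ring homomorphism f from S onto the ring M_2(F_2) of 2×2 matrices over the field with two elements, whose kernel is exactly the set of elements of S of the form (1+i)·B (entrywise scalar multiple) with B ∈ Λ. Consequently Λ/(1+i)Λ ≅ M_2(F_2). -/

import Mathlib

open Matrix

/-- `θ = (1+√5)/2` viewed in `ℂ`. -/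
noncomputable def goldenTheta : ℂ := (((1 + Real.sqrt 5) / 2 : ℝ) : ℂ)

/-- `θ̄ = (1-√5)/2` viewed in `ℂ`. -/
noncomputable def goldenThetaBar : ℂ := (((1 - Real.sqrt 5) / 2 : ℝ) : ℂ)

/-- The set `Λ` of matrices `[[p+qθ, i(r+sθ̄)],[r+sθ, p+qθ̄]]` with `p,q,r,s ∈ ℤ[i]`. -/
def goldenOrder : Set (Matrix (Fin 2) (Fin 2) ℂ) :=
  {M | ∃ p q r s : GaussianInt,
    M = !![GaussianInt.toComplex p + GaussianInt.toComplex q * goldenTheta,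
           Complex.I * (GaussianInt.toComplex r + GaussianInt.toComplex s * goldenThetaBar);
           GaussianInt.toComplex r + GaussianInt.toComplex s * goldenTheta,
           GaussianInt.toComplex p + GaussianInt.toComplex q * goldenThetaBar]}

/-! ### Auxiliary material -/

namespace GoldenAux

lemma goldenTheta_sq : goldenTheta ^ 2 = goldenTheta + 1 := by
  have h5 : ((Real.sqrt 5 : ℝ) : ℂ) ^ 2 = 5 := by
    rw [← Complex.ofReal_pow, Real.sq_sqrt (by norm_num : (5:ℝ) ≥ 0)]; norm_num
  unfold goldenTheta; push_cast; linear_combination (1/4 : ℂ) * h5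

lemma goldenThetaBar_eq : goldenThetaBar = 1 - goldenTheta := by
  unfold goldenTheta goldenThetaBar; push_cast; ring

lemma int_theta {a b : ℤ} (h : (a : ℝ) = b * ((1 + Real.sqrt 5) / 2)) : a = 0 ∧ b = 0 := by
  have h5 : Irrational (Real.sqrt 5) := by
    have : Nat.Prime 5 := by norm_num
    simpa using this.irrational_sqrt
  rcases eq_or_ne b 0 with hb | hb
  · subst hb; simp at h; exact ⟨by exact_mod_cast h, rfl⟩
  · exfalso
    have hbR : (b : ℝ) ≠ 0 := Int.cast_ne_zero.mpr hb
    have : Real.sqrt 5 = ((2 * a - b : ℤ) : ℝ) / ((b : ℤ) : ℝ) := by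
      push_cast
      field_simp
      linarith
    exact (irrational_iff_ne_rational _).mp h5 (2 * a - b) b hb this

lemma coord_aux {x y : GaussianInt}
    (h : (GaussianInt.toComplex x) = (GaussianInt.toComplex y) * goldenTheta) :
    x = 0 ∧ y = 0 := by
  have hre := congrArg Complex.re h
  have him := congrArg Complex.im h
  simp only [GaussianInt.toComplex_def, goldenTheta, Complex.add_re, Complex.add_im,
    Complex.mul_re, Complex.mul_im, Complex.ofReal_re, Complex.ofReal_im, Complex.I_re,
    Complex.I_im, Complex.intCast_re, Complex.intCast_im] at hre him
  obtain ⟨h1, h2⟩ := int_theta (a := x.re) (b := y.re) (by linear_combination hre)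
  obtain ⟨h3, h4⟩ := int_theta (a := x.im) (b := y.im) (by linear_combination him)
  constructor <;> · rw [Zsqrtd.ext_iff]; simp_all

lemma decomp_unique {p q p' q' : GaussianInt}
    (h : GaussianInt.toComplex p + GaussianInt.toComplex q * goldenTheta
       = GaussianInt.toComplex p' + GaussianInt.toComplex q' * goldenTheta) :
    p = p' ∧ q = q' := by
  have h' : GaussianInt.toComplex (p - p') = GaussianInt.toComplex (q' - q) * goldenTheta := by
    rw [GaussianInt.toComplex_sub, GaussianInt.toComplex_sub]
    linear_combination h
  obtain ⟨h1, h2⟩ := coord_aux h'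
  exact ⟨sub_eq_zero.mp h1, (sub_eq_zero.mp h2).symm⟩

/-- The matrix of the Golden order attached to `(p,q,r,s)`. -/
noncomputable def gMat (p q r s : GaussianInt) : Matrix (Fin 2) (Fin 2) ℂ :=
  !![GaussianInt.toComplex p + GaussianInt.toComplex q * goldenTheta,
     Complex.I * (GaussianInt.toComplex r + GaussianInt.toComplex s * goldenThetaBar);
     GaussianInt.toComplex r + GaussianInt.toComplex s * goldenTheta,
     GaussianInt.toComplex p + GaussianInt.toComplex q * goldenThetaBar]

lemma mem_goldenOrder_iff {M : Matrix (Fin 2) (Fin 2) ℂ} :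
    M ∈ goldenOrder ↔ ∃ p q r s : GaussianInt, M = gMat p q r s := Iff.rfl

lemma gMat_inj {p q r s p' q' r' s' : GaussianInt} (h : gMat p q r s = gMat p' q' r' s') :
    p = p' ∧ q = q' ∧ r = r' ∧ s = s' := by
  have h00 := congrFun (congrFun h 0) 0
  have h10 := congrFun (congrFun h 1) 0
  simp only [gMat, Matrix.cons_val', Matrix.cons_val_zero, Matrix.cons_val_one,
    Matrix.head_cons, Matrix.empty_val', Matrix.cons_val_fin_one, Matrix.head_fin_const] at h00 h10
  obtain ⟨hp, hq⟩ := decomp_unique h00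
  obtain ⟨hr, hs⟩ := decomp_unique h10
  exact ⟨hp, hq, hr, hs⟩

lemma gMat_mul (p q r s p' q' r' s' : GaussianInt) :
    gMat p q r s * gMat p' q' r' s'
      = gMat (p*p' + q*q' + ⟨0,1⟩*(r*r' + s*r' - s*s'))
             (p*q' + q*p' + q*q' + ⟨0,1⟩*(r*s' - s*r'))
             (r*p' + s*q' + p*r' + q*r' - q*s')
             (r*q' + s*p' + s*q' + p*s' - q*r') := by
  have ht := goldenTheta_sq
  have hI : GaussianInt.toComplex ⟨0,1⟩ = Complex.I := by
    rw [GaussianInt.toComplex_def']; simp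
  ext i j
  fin_cases i <;> fin_cases j <;>
    simp [gMat, Matrix.mul_apply, Fin.sum_univ_two, goldenThetaBar_eq,
      _root_.map_add, _root_.map_mul, _root_.map_sub, hI]
  · linear_combination (GaussianInt.toComplex q * GaussianInt.toComplex q'
      - Complex.I * GaussianInt.toComplex s * GaussianInt.toComplex s') * ht
  · linear_combination (Complex.I * (GaussianInt.toComplex s * GaussianInt.toComplex q'
      - GaussianInt.toComplex q * GaussianInt.toComplex s')) * ht
  · linear_combination (GaussianInt.toComplex s * GaussianInt.toComplex q'
      - GaussianInt.toComplex q * GaussianInt.toComplex s') * ht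
  · linear_combination (GaussianInt.toComplex q * GaussianInt.toComplex q'
      - Complex.I * GaussianInt.toComplex s * GaussianInt.toComplex s') * ht

lemma gMat_add (p q r s p' q' r' s' : GaussianInt) :
    gMat p q r s + gMat p' q' r' s' = gMat (p+p') (q+q') (r+r') (s+s') := by
  ext i j
  fin_cases i <;> fin_cases j <;>
    simp [gMat, Matrix.add_apply, _root_.map_add] <;> ring

lemma gMat_one : gMat 1 0 0 0 = 1 := by
  ext i j
  fin_cases i <;> fin_cases j <;>
    simp [gMat, Matrix.one_apply, Fin.zero_eta, Fin.mk_one]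

lemma gMat_zero : gMat 0 0 0 0 = 0 := by
  ext i j
  fin_cases i <;> fin_cases j <;> simp [gMat]

lemma gMat_smul (p q r s : GaussianInt) :
    (1 + Complex.I) • gMat p q r s = gMat (⟨1,1⟩*p) (⟨1,1⟩*q) (⟨1,1⟩*r) (⟨1,1⟩*s) := by
  have hI : GaussianInt.toComplex ⟨1,1⟩ = 1 + Complex.I := by
    rw [GaussianInt.toComplex_def']; simp
  ext i j
  fin_cases i <;> fin_cases j <;>
    simp [gMat, Matrix.smul_apply, smul_eq_mul, _root_.map_mul, hI] <;> ring

/-- Reduction of a Gaussian integer modulo `1+i`, as a ring homomorphism to `𝔽₂`. -/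
def gres : GaussianInt →+* ZMod 2 where
  toFun x := ((x.re : ZMod 2) + (x.im : ZMod 2))
  map_one' := by simp [Zsqrtd.re_one, Zsqrtd.im_one]
  map_mul' x y := by
    have h2 : (2 : ZMod 2) = 0 := rfl
    simp only [Zsqrtd.re_mul, Zsqrtd.im_mul]
    push_cast
    linear_combination (-(x.im : ZMod 2) * (y.im : ZMod 2)) * h2
  map_zero' := by simp [Zsqrtd.re_zero, Zsqrtd.im_zero]
  map_add' x y := by simp only [Zsqrtd.re_add, Zsqrtd.im_add]; push_cast; ring

lemma gres_i : gres (⟨0,1⟩ : GaussianInt) = 1 := by decide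
lemma gres_onePlusI : gres (⟨1,1⟩ : GaussianInt) = 0 := by decide

lemma gres_eq_zero {p : GaussianInt} (h : gres p = 0) :
    ∃ p₀ : GaussianInt, p = ⟨1,1⟩ * p₀ := by
  have h2 : ((p.re + p.im : ℤ) : ZMod 2) = 0 := by
    push_cast
    simpa [gres] using h
  rw [ZMod.intCast_zmod_eq_zero_iff_dvd] at h2
  obtain ⟨k, hk⟩ := h2
  refine ⟨⟨k, k - p.re⟩, ?_⟩
  rw [Zsqrtd.ext_iff]
  constructor <;> simp [Zsqrtd.re_mul, Zsqrtd.im_mul] <;> omega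

/-- The matrix of `M₂(𝔽₂)` attached to the residues `(a,b,c,d)`. -/
def fMat (a b c d : ZMod 2) : Matrix (Fin 2) (Fin 2) (ZMod 2) :=
  !![a + c + d, b + c; b + d, a + b + c + d]

lemma fMat_mul (a b c d a' b' c' d' : ZMod 2) :
    fMat (a*a' + b*b' + (c*c' + d*c' - d*d')) (a*b' + b*a' + b*b' + (c*d' - d*c'))
      (c*a' + d*b' + a*c' + b*c' - b*d') (c*b' + d*a' + d*b' + a*d' - b*c')
      = fMat a b c d * fMat a' b' c' d' := by
  revert a b c d a' b' c' d'; decide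

lemma fMat_add (a b c d a' b' c' d' : ZMod 2) :
    fMat (a+a') (b+b') (c+c') (d+d') = fMat a b c d + fMat a' b' c' d' := by
  revert a b c d a' b' c' d'; decide

lemma fMat_one : fMat 1 0 0 0 = 1 := by decide
lemma fMat_zero : fMat 0 0 0 0 = 0 := by decide

lemma fMat_eq_zero {a b c d : ZMod 2} (h : fMat a b c d = 0) :
    a = 0 ∧ b = 0 ∧ c = 0 ∧ d = 0 := by
  revert h; revert a b c d; decide

lemma fMat_solve (w x y z : ZMod 2) :
    fMat (w+x+y) (w+z) (w+x+z) (w+y+z) = !![w, x; y, z] := by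
  revert w x y z; decide

/-- A set-theoretic lift `𝔽₂ → ℤ[i]`. -/
def glift (z : ZMod 2) : GaussianInt := if z = 0 then 0 else 1

lemma gres_glift (z : ZMod 2) : gres (glift z) = z := by
  fin_cases z <;> simp [glift] <;> rfl

open Classical in
/-- The reduction map on matrices. -/
noncomputable def redMap (M : Matrix (Fin 2) (Fin 2) ℂ) : Matrix (Fin 2) (Fin 2) (ZMod 2) :=
  if h : M ∈ goldenOrder then
    fMat (gres h.choose) (gres h.choose_spec.choose)
      (gres h.choose_spec.choose_spec.choose)
      (gres h.choose_spec.choose_spec.choose_spec.choose)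
  else 0

lemma redMap_gMat (p q r s : GaussianInt) :
    redMap (gMat p q r s) = fMat (gres p) (gres q) (gres r) (gres s) := by
  have h : gMat p q r s ∈ goldenOrder := ⟨p, q, r, s, rfl⟩
  rw [redMap, dif_pos h]
  have hspec : gMat p q r s
      = gMat h.choose h.choose_spec.choose h.choose_spec.choose_spec.choose
          h.choose_spec.choose_spec.choose_spec.choose :=
    h.choose_spec.choose_spec.choose_spec.choose_spec
  obtain ⟨h1, h2, h3, h4⟩ := gMat_inj hspec.symm
  rw [congrArg gres h1, congrArg gres h2, congrArg gres h3, congrArg gres h4]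


lemma redMap_mul {M N : Matrix (Fin 2) (Fin 2) ℂ} (hM : M ∈ goldenOrder)
    (hN : N ∈ goldenOrder) : redMap (M * N) = redMap M * redMap N := by
  obtain ⟨p, q, r, s, rfl⟩ := mem_goldenOrder_iff.mp hM
  obtain ⟨p', q', r', s', rfl⟩ := mem_goldenOrder_iff.mp hN
  rw [gMat_mul, redMap_gMat, redMap_gMat, redMap_gMat]
  simp only [_root_.map_add, _root_.map_mul, _root_.map_sub, gres_i, one_mul]
  exact fMat_mul _ _ _ _ _ _ _ _

lemma redMap_add {M N : Matrix (Fin 2) (Fin 2) ℂ} (hM : M ∈ goldenOrder)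
    (hN : N ∈ goldenOrder) : redMap (M + N) = redMap M + redMap N := by
  obtain ⟨p, q, r, s, rfl⟩ := mem_goldenOrder_iff.mp hM
  obtain ⟨p', q', r', s', rfl⟩ := mem_goldenOrder_iff.mp hN
  rw [gMat_add, redMap_gMat, redMap_gMat, redMap_gMat]
  simp only [_root_.map_add]
  exact fMat_add _ _ _ _ _ _ _ _

lemma redMap_one : redMap (1 : Matrix (Fin 2) (Fin 2) ℂ) = 1 := by
  rw [← gMat_one, redMap_gMat]
  simp only [_root_.map_one, _root_.map_zero]
  exact fMat_one

lemma redMap_zero : redMap (0 : Matrix (Fin 2) (Fin 2) ℂ) = 0 := by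
  rw [← gMat_zero, redMap_gMat]
  simp only [_root_.map_zero]
  exact fMat_zero


lemma redMap_surj (N : Matrix (Fin 2) (Fin 2) (ZMod 2)) :
    ∃ M ∈ goldenOrder, redMap M = N := by
  refine ⟨gMat (glift (N 0 0 + N 0 1 + N 1 0)) (glift (N 0 0 + N 1 1))
      (glift (N 0 0 + N 0 1 + N 1 1)) (glift (N 0 0 + N 1 0 + N 1 1)),
    ⟨_, _, _, _, rfl⟩, ?_⟩
  rw [redMap_gMat, gres_glift, gres_glift, gres_glift, gres_glift, fMat_solve]
  exact (Matrix.eta_fin_two N).symm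

lemma redMap_ker {M : Matrix (Fin 2) (Fin 2) ℂ} (hM : M ∈ goldenOrder) :
    redMap M = 0 ↔ ∃ B ∈ goldenOrder, M = (1 + Complex.I) • B := by
  obtain ⟨p, q, r, s, rfl⟩ := mem_goldenOrder_iff.mp hM
  constructor
  · intro h
    rw [redMap_gMat] at h
    obtain ⟨h1, h2, h3, h4⟩ := fMat_eq_zero h
    obtain ⟨p₀, hp₀⟩ := gres_eq_zero h1
    obtain ⟨q₀, hq₀⟩ := gres_eq_zero h2
    obtain ⟨r₀, hr₀⟩ := gres_eq_zero h3
    obtain ⟨s₀, hs₀⟩ := gres_eq_zero h4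
    refine ⟨gMat p₀ q₀ r₀ s₀, ⟨p₀, q₀, r₀, s₀, rfl⟩, ?_⟩
    rw [gMat_smul, hp₀, hq₀, hr₀, hs₀]
  · rintro ⟨B, hB, hMB⟩
    obtain ⟨p₀, q₀, r₀, s₀, rfl⟩ := mem_goldenOrder_iff.mp hB
    rw [hMB, gMat_smul, redMap_gMat]
    simp only [_root_.map_mul, gres_onePlusI, zero_mul]
    exact fMat_zero

end GoldenAux

set_option maxHeartbeats 1000000 in
open GoldenAux in
/-- Quotient of the Golden order by `(1+i)`: there is a surjective ring
homomorphism from the Golden order onto `M₂(𝔽₂)` whose kernel consists exactly of the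
multiples `(1+i)·B`, `B ∈ Λ`.  Consequently `Λ/(1+i)Λ ≅ M₂(𝔽₂)`. -/
theorem stmt_5 (S : Subring (Matrix (Fin 2) (Fin 2) ℂ))
    (hS : (S : Set (Matrix (Fin 2) (Fin 2) ℂ)) = goldenOrder) :
    ∃ f : S →+* Matrix (Fin 2) (Fin 2) (ZMod 2),
      Function.Surjective f ∧
      ∀ x : S, f x = 0 ↔ ∃ B ∈ goldenOrder,
        (x : Matrix (Fin 2) (Fin 2) ℂ) = (1 + Complex.I) • B := by
  have hmem : ∀ x : S, (x : Matrix (Fin 2) (Fin 2) ℂ) ∈ goldenOrder := by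
    intro x; rw [← hS]; exact x.2
  refine ⟨{
      toFun := fun x => redMap (x : Matrix (Fin 2) (Fin 2) ℂ)
      map_one' := by
        simp only [OneMemClass.coe_one]
        exact redMap_one
      map_mul' := by
        intro x y
        simp only [Subring.coe_mul]
        exact redMap_mul (hmem x) (hmem y)
      map_zero' := by
        simp only [ZeroMemClass.coe_zero]
        exact redMap_zero
      map_add' := by
        intro x y
        simp only [Subring.coe_add]
        exact redMap_add (hmem x) (hmem y) }, ?_, ?_⟩
  · intro N
    obtain ⟨M, hM, hMN⟩ := redMap_surj N
    exact ⟨⟨M, by rw [← SetLike.mem_coe, hS]; exact hM⟩, hMN⟩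
  · intro x
    exact redMap_ker (hmem x)
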